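/- Let k ≥ 1 and let Ã ∈ ℝ^{n×m} be a real matrix of rank exactly k. Then there exists a set S of k column indices of Ã such that every column Ã_i of Ã can be written as Ã_i = Σ_{j ∈ S} c_{i,j} Ã_j for real coefficients c_{i,j} with |c_{i,j}| ≤ 1 for all i and j. -/

import Mathlib

open Matrix

noncomputable def gramAux {k n : ℕ} (v : Fin k → Fin n → ℝ) : Matrix (Fin k) (Fin k) ℝ :=
  Matrix.of v * (Matrix.of v)ᵀ

lemma vecMul_of_eq {k n : ℕ} (v : Fin k → Fin n → ℝ) (c : Fin k → ℝ) :
    c ᵥ* Matrix.of v = ∑ a, c a • v a := by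
  ext r
  simp [Matrix.vecMul, dotProduct, Finset.sum_apply]

lemma vecMul_gramAux_eq_zero_iff {k n : ℕ} (v : Fin k → Fin n → ℝ) (c : Fin k → ℝ) :
    c ᵥ* gramAux v = 0 ↔ ∑ a, c a • v a = 0 := by
  rw [← vecMul_of_eq]
  constructor
  · intro h
    have h2 : (c ᵥ* gramAux v) ⬝ᵥ c = 0 := by rw [h]; simp
    rw [gramAux, ← Matrix.vecMul_vecMul, Matrix.vecMul_transpose,
      dotProduct_comm, Matrix.dotProduct_mulVec] at h2
    exact dotProduct_self_eq_zero.mp h2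
  · intro h
    rw [gramAux, ← Matrix.vecMul_vecMul, h, Matrix.zero_vecMul]

lemma gramAux_det_ne_zero_iff {k n : ℕ} (v : Fin k → Fin n → ℝ) :
    (gramAux v).det ≠ 0 ↔ LinearIndependent ℝ v := by
  constructor
  · intro hdet
    by_contra hdep
    rw [Fintype.not_linearIndependent_iff] at hdep
    obtain ⟨c, hc0, a, ha⟩ := hdep
    exact hdet (Matrix.exists_vecMul_eq_zero_iff.mp
      ⟨c, fun h => ha (congrFun h a), (vecMul_gramAux_eq_zero_iff v c).mpr hc0⟩)
  · intro hli hdet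
    obtain ⟨c, hc, hc0⟩ := Matrix.exists_vecMul_eq_zero_iff.mpr hdet
    rw [vecMul_gramAux_eq_zero_iff] at hc0
    exact hc (funext fun a =>
      linearIndependent_iff'.mp hli Finset.univ c (by simpa using hc0) a (Finset.mem_univ a))

lemma gramAux_mul {k n : ℕ} (v w : Fin k → Fin n → ℝ) (M : Matrix (Fin k) (Fin k) ℝ)
    (h : ∀ a r, w a r = ∑ b, M a b * v b r) :
    gramAux w = M * gramAux v * Mᵀ := by
  have hw : Matrix.of w = M * Matrix.of v := by
    ext a r; rw [Matrix.mul_apply]; exact h a r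
  rw [gramAux, gramAux, hw, Matrix.transpose_mul, ← Matrix.mul_assoc, ← Matrix.mul_assoc]

lemma gramAux_comp_equiv {k n : ℕ} (v : Fin k → Fin n → ℝ) (e : Fin k ≃ Fin k) :
    (gramAux (v ∘ e)).det = (gramAux v).det := by
  have : gramAux (v ∘ e) = (gramAux v).submatrix e e := by
    ext a b; simp [gramAux, Matrix.mul_apply]
  rw [this, Matrix.det_submatrix_equiv_self]

lemma det_updateRow_one {k : ℕ} (a0 : Fin k) (d : Fin k → ℝ) :
    ((1 : Matrix (Fin k) (Fin k) ℝ).updateRow a0 d).det = d a0 := by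
  rw [← Matrix.det_transpose, show (1 : Matrix (Fin k) (Fin k) ℝ) = (1 : _)ᵀ from
    (Matrix.transpose_one).symm, Matrix.updateRow_transpose, Matrix.transpose_transpose,
    ← Matrix.cramer_apply, Matrix.cramer_one]
  rfl

noncomputable def gramS {n m : ℕ} (A : Matrix (Fin n) (Fin m) ℝ) (S : Finset (Fin m)) :
    Matrix S S ℝ := Matrix.of fun a b => ∑ r, A r a * A r b

lemma gramS_det {n m k : ℕ} (A : Matrix (Fin n) (Fin m) ℝ) (S : Finset (Fin m))
    (h : S.card = k) :
    (gramAux (fun a => Aᵀ (S.orderEmbOfFin h a))).det = (gramS A S).det := by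
  rw [← Matrix.det_submatrix_equiv_self (S.orderIsoOfFin h).toEquiv (gramS A S)]
  congr 1

lemma gramS_det_of_range {n m k : ℕ} (A : Matrix (Fin n) (Fin m) ℝ) (S : Finset (Fin m))
    (h : S.card = k) (τ : Fin k → Fin m) (hinj : Function.Injective τ)
    (hrange : Set.range τ = ↑S) :
    (gramAux (fun a => Aᵀ (τ a))).det = (gramS A S).det := by
  set σ : Fin k → Fin m := fun a => S.orderEmbOfFin h a with hσ
  have hσinj : Function.Injective σ := (S.orderEmbOfFin h).injective
  have hσrange : Set.range σ = ↑S := S.range_orderEmbOfFin h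
  let e : Fin k ≃ Fin k :=
    (Equiv.ofInjective τ hinj).trans
      ((Equiv.setCongr (hrange.trans hσrange.symm)).trans (Equiv.ofInjective σ hσinj).symm)
  have he : ∀ a, σ (e a) = τ a := by
    intro a
    show σ ((Equiv.ofInjective σ hσinj).symm _) = τ a
    exact congrArg Subtype.val ((Equiv.ofInjective σ hσinj).apply_symm_apply _) |>.trans rfl
  have : (fun a => Aᵀ (τ a)) = (fun a => Aᵀ (σ a)) ∘ e := by
    funext a; simp [he a]
  rw [this, gramAux_comp_equiv]
  exact gramS_det A S h

/-- If `Ã ∈ ℝ^{n×m}` has rank exactly `k ≥ 1`, then there is a set `S` of `k`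
column indices such that every column of `Ã` is a linear combination of the columns indexed by
`S` with coefficients of absolute value at most `1`. -/
theorem exists_k_columns_spanning_with_small_coefficients
    {n m k : ℕ} (hk : 1 ≤ k) (A : Matrix (Fin n) (Fin m) ℝ) (hrank : A.rank = k) :
    ∃ S : Finset (Fin m), S.card = k ∧
      ∃ c : Fin m → Fin m → ℝ,
        (∀ i : Fin m, ∀ j ∈ S, |c i j| ≤ 1) ∧
        (∀ i : Fin m, ∀ r : Fin n, A r i = ∑ j ∈ S, c i j * A r j) := by
  classical
  have hspan : Module.finrank ℝ (Submodule.span ℝ (Set.range Aᵀ)) = k := by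
    rw [Matrix.rank_eq_finrank_span_cols] at hrank; exact hrank
  -- there exists a candidate set
  have hm : 0 < m := by
    have h1 : A.rank ≤ Fintype.card (Fin m) := A.rank_le_card_width
    rw [hrank, Fintype.card_fin] at h1
    omega
  haveI : Nonempty (Fin m) := ⟨⟨0, hm⟩⟩
  have hne : ∃ S0 : Finset (Fin m), S0.card = k ∧ (gramS A S0).det ≠ 0 := by
    obtain ⟨b, hbsub, hbspan, hbind⟩ := exists_linearIndependent ℝ (Set.range Aᵀ)
    have hbfin : b.Finite := hbind.setFinite
    haveI := hbfin.fintype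
    have hbcard : b.toFinset.card = k := by
      rw [← finrank_span_set_eq_card hbind, hbspan, hspan]
    set pick : (Fin n → ℝ) → Fin m := Function.invFun Aᵀ with hpickdef
    have hpick : ∀ x ∈ b, Aᵀ (pick x) = x := fun x hx => Function.invFun_eq (hbsub hx)
    set S0 : Finset (Fin m) := b.toFinset.image pick with hS0def
    have hinj : Set.InjOn pick b.toFinset := by
      intro x1 hx1 x2 hx2 hp
      rw [← hpick x1 (Set.mem_toFinset.mp hx1), ← hpick x2 (Set.mem_toFinset.mp hx2), hp]
    have hcard0 : S0.card = k := by
      rw [hS0def, Finset.card_image_of_injOn hinj, hbcard]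
    refine ⟨S0, hcard0, ?_⟩
    rw [← gramS_det A S0 hcard0]
    rw [gramAux_det_ne_zero_iff]
    have hmem : ∀ a : Fin k, Aᵀ (S0.orderEmbOfFin hcard0 a) ∈ b := by
      intro a
      have hmemS0 : S0.orderEmbOfFin hcard0 a ∈ Finset.image pick b.toFinset :=
        S0.orderEmbOfFin_mem hcard0 a
      obtain ⟨x, hx, hpx⟩ := Finset.mem_image.mp hmemS0
      rw [← hpx, hpick x (Set.mem_toFinset.mp hx)]
      exact Set.mem_toFinset.mp hx
    have hAinj : ∀ s1 ∈ S0, ∀ s2 ∈ S0, Aᵀ s1 = Aᵀ s2 → s1 = s2 := by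
      intro s1 hs1 s2 hs2 hA
      obtain ⟨x1, hx1, hpx1⟩ := Finset.mem_image.mp (show s1 ∈ Finset.image pick b.toFinset from hs1)
      obtain ⟨x2, hx2, hpx2⟩ := Finset.mem_image.mp (show s2 ∈ Finset.image pick b.toFinset from hs2)
      rw [← hpx1, ← hpx2] at hA ⊢
      rw [hpick x1 (Set.mem_toFinset.mp hx1), hpick x2 (Set.mem_toFinset.mp hx2)] at hA
      rw [hA]
    set g : Fin k → b := fun a => ⟨Aᵀ (S0.orderEmbOfFin hcard0 a), hmem a⟩ with hg
    have hginj : Function.Injective g := by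
      intro a1 a2 h12
      have : Aᵀ (S0.orderEmbOfFin hcard0 a1) = Aᵀ (S0.orderEmbOfFin hcard0 a2) :=
        congrArg Subtype.val h12
      exact (S0.orderEmbOfFin hcard0).injective
        (hAinj _ (S0.orderEmbOfFin_mem hcard0 a1) _ (S0.orderEmbOfFin_mem hcard0 a2) this)
    exact hbind.comp g hginj
  -- pick the maximizer of |det (gramS A S)| among candidates
  obtain ⟨S0, hS0⟩ := hne
  set T : Finset (Finset (Fin m)) :=
    Finset.univ.filter (fun S => S.card = k ∧ (gramS A S).det ≠ 0) with hT
  obtain ⟨S, hST, hSmax⟩ := T.exists_max_image (fun S => |(gramS A S).det|)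
    ⟨S0, by simp [hT, hS0.1, hS0.2]⟩
  rw [hT, Finset.mem_filter] at hST
  obtain ⟨-, hScard, hSdet⟩ := hST
  set σ : Fin k → Fin m := fun a => S.orderEmbOfFin hScard a with hσ
  have hσinj : Function.Injective σ := (S.orderEmbOfFin hScard).injective
  have hσrange : Set.range σ = ↑S := S.range_orderEmbOfFin hScard
  have hσmem : ∀ a, σ a ∈ S := fun a => S.orderEmbOfFin_mem hScard a
  set v : Fin k → Fin n → ℝ := fun a => Aᵀ (σ a) with hv
  have hvdet : (gramAux v).det ≠ 0 := by
    rw [hv, gramS_det A S hScard]; exact hSdet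
  have hvind : LinearIndependent ℝ v := (gramAux_det_ne_zero_iff v).mp hvdet
  -- the chosen columns span the column space
  have hvspan : Submodule.span ℝ (Set.range v) = Submodule.span ℝ (Set.range Aᵀ) := by
    apply Submodule.eq_of_le_of_finrank_le
    · exact Submodule.span_mono (Set.range_subset_iff.mpr fun a => Set.mem_range_self (σ a))
    · rw [hspan, finrank_span_eq_card hvind, Fintype.card_fin]
  -- representation of each column
  have hrep : ∀ i : Fin m, ∃ c : Fin k → ℝ, ∑ a, c a • v a = Aᵀ i := by
    intro i
    rw [← Submodule.mem_span_range_iff_exists_fun, hvspan]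
    exact Submodule.subset_span (Set.mem_range_self i)
  choose d hd using hrep
  -- coefficients are bounded by 1
  have hbound : ∀ i a0, |d i a0| ≤ 1 := by
    intro i a0
    by_contra hgt
    push_neg at hgt
    by_cases hiS : i ∈ S
    · -- `i` is already one of the chosen columns: coefficients are 0/1
      set a1 : Fin k := (S.orderIsoOfFin hScard).symm ⟨i, hiS⟩ with ha1
      have hσa1 : σ a1 = i := by
        have h1 : ((S.orderIsoOfFin hScard) a1 : Fin m) = σ a1 :=
          Finset.coe_orderIsoOfFin_apply S hScard a1
        rw [← h1, ha1, OrderIso.apply_symm_apply]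
      have hva1 : v a1 = Aᵀ i := by rw [hv]; simp only [hσa1]
      have hsing : ∑ a, (Pi.single a1 1 : Fin k → ℝ) a • v a = v a1 := by
        rw [Finset.sum_eq_single a1]
        · simp
        · intro c _ hc; rw [Pi.single_eq_of_ne hc, zero_smul]
        · intro h; exact absurd (Finset.mem_univ a1) h
      have hz : ∑ a, (d i a - (Pi.single a1 1 : Fin k → ℝ) a) • v a = 0 := by
        simp only [sub_smul]
        rw [Finset.sum_sub_distrib, hd i, hsing, hva1, sub_self]
      have hcoef := linearIndependent_iff'.mp hvind Finset.univ
        (fun a => d i a - (Pi.single a1 1 : Fin k → ℝ) a) hz a0 (Finset.mem_univ a0)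
      have hda0 : d i a0 = (Pi.single a1 1 : Fin k → ℝ) a0 := by
        have h := hcoef
        linarith
      rcases eq_or_ne a0 a1 with h01 | h01
      · rw [hda0, h01, Pi.single_eq_same] at hgt; norm_num at hgt
      · rw [hda0, Pi.single_eq_of_ne h01] at hgt; norm_num at hgt
    · -- exchange step: swapping column `σ a0` for column `i` increases the Gram determinant
      set τ : Fin k → Fin m := Function.update σ a0 i with hτ
      have hτa0 : τ a0 = i := Function.update_self a0 i σ
      have hτne : ∀ a, a ≠ a0 → τ a = σ a := fun a ha => Function.update_of_ne ha i σ
      have hτinj : Function.Injective τ := by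
        intro a c hac
        rcases eq_or_ne a a0 with ha | ha <;> rcases eq_or_ne c a0 with hc | hc
        · rw [ha, hc]
        · exfalso; rw [ha, hτa0, hτne c hc] at hac; exact hiS (hac ▸ hσmem c)
        · exfalso; rw [hc, hτa0, hτne a ha] at hac; exact hiS (hac ▸ hσmem a)
        · rw [hτne a ha, hτne c hc] at hac; exact hσinj hac
      set S' : Finset (Fin m) := insert i (S.erase (σ a0)) with hS'
      have hiS'e : i ∉ S.erase (σ a0) := fun h => hiS (Finset.mem_of_mem_erase h)
      have hS'card : S'.card = k := by
        rw [hS', Finset.card_insert_of_notMem hiS'e,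
          Finset.card_erase_of_mem (hσmem a0), hScard]
        omega
      have hτrange : Set.range τ = ↑S' := by
        ext j
        constructor
        · rintro ⟨a, rfl⟩
          rcases eq_or_ne a a0 with ha | ha
          · rw [ha, hτa0]; exact Finset.mem_coe.mpr (Finset.mem_insert_self _ _)
          · rw [hτne a ha]
            exact Finset.mem_coe.mpr (Finset.mem_insert_of_mem
              (Finset.mem_erase.mpr ⟨fun h => ha (hσinj h), hσmem a⟩))
        · intro hj
          rcases Finset.mem_insert.mp (Finset.mem_coe.mp hj) with hj | hj
          · exact ⟨a0, by rw [hτa0, hj]⟩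
          · obtain ⟨hne', hjS⟩ := Finset.mem_erase.mp hj
            obtain ⟨a, ha⟩ : j ∈ Set.range σ := hσrange.symm ▸ Finset.mem_coe.mpr hjS
            refine ⟨a, ?_⟩
            rw [hτne a (fun h => hne' (by rw [← ha, h]))]
            exact ha
      set M : Matrix (Fin k) (Fin k) ℝ := (1 : Matrix (Fin k) (Fin k) ℝ).updateRow a0 (d i)
        with hM
      have hMw : ∀ a r, Aᵀ (τ a) r = ∑ c, M a c * v c r := by
        intro a r
        rcases eq_or_ne a a0 with ha | ha
        · rw [ha, hτa0]
          simp only [hM, Matrix.updateRow_self]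
          have h1 := congrFun (hd i) r
          rw [← h1, Finset.sum_apply]
          exact Finset.sum_congr rfl fun c _ => rfl
        · rw [hτne a ha]
          have h2 : ∀ c, M a c = (1 : Matrix (Fin k) (Fin k) ℝ) a c := by
            intro c
            rw [hM]
            exact congrFun (Matrix.updateRow_ne ha) c
          simp only [h2, Matrix.one_apply, ite_mul, one_mul, zero_mul]
          rw [Finset.sum_ite_eq Finset.univ a fun c => v c r]
          simp [hv]
      have hdet' : (gramAux (fun a => Aᵀ (τ a))).det = (d i a0)^2 * (gramAux v).det := by
        rw [gramAux_mul v _ M hMw, Matrix.det_mul, Matrix.det_mul, Matrix.det_transpose,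
          hM, det_updateRow_one]
        ring
      have hSdet_eq : (gramAux v).det = (gramS A S).det := gramS_det A S hScard
      have hS'det_eq : (gramS A S').det = (d i a0)^2 * (gramS A S).det := by
        rw [← gramS_det_of_range A S' hS'card τ hτinj hτrange, hdet', hSdet_eq]
      have habs : |(gramS A S).det| > 0 := abs_pos.mpr hSdet
      have hsq : (1:ℝ) < (d i a0)^2 := by
        nlinarith [sq_abs (d i a0), abs_nonneg (d i a0)]
      have hgt' : |(gramS A S').det| > |(gramS A S).det| := by
        rw [hS'det_eq, abs_mul, abs_of_nonneg (sq_nonneg (d i a0))]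
        nlinarith
      have hS'T : S' ∈ T := by
        rw [hT, Finset.mem_filter]
        refine ⟨Finset.mem_univ _, hS'card, ?_⟩
        rw [hS'det_eq]
        exact mul_ne_zero (by positivity) hSdet
      exact absurd (hSmax S' hS'T) (not_le.mpr hgt')
  -- assemble the answer
  refine ⟨S, hScard, fun i j => if hj : j ∈ S then
      d i ((S.orderIsoOfFin hScard).symm ⟨j, hj⟩) else 0, ?_, ?_⟩
  · intro i j hj
    simp only [dif_pos hj]
    exact hbound i _
  · intro i r
    have hterm : ∀ a : Fin k, (if hj : σ a ∈ S then
        d i ((S.orderIsoOfFin hScard).symm ⟨σ a, hj⟩) else 0) = d i a := by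
      intro a
      rw [dif_pos (hσmem a)]
      congr 1
      have : (⟨σ a, hσmem a⟩ : S) = S.orderIsoOfFin hScard a :=
        Subtype.ext (Finset.coe_orderIsoOfFin_apply S hScard a).symm
      rw [this]
      exact (S.orderIsoOfFin hScard).symm_apply_apply a
    have hcoe : ∀ a : Fin k, ((S.orderIsoOfFin hScard).toEquiv a : Fin m) = σ a := by
      intro a; exact Finset.coe_orderIsoOfFin_apply S hScard a
    calc A r i = (∑ a, d i a • v a) r := by rw [hd i]; rfl
    _ = ∑ a, d i a * A r (σ a) := by
        rw [Finset.sum_apply]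
        exact Finset.sum_congr rfl fun a _ => rfl
    _ = ∑ a : Fin k, (if hj : σ a ∈ S then
          d i ((S.orderIsoOfFin hScard).symm ⟨σ a, hj⟩) else 0) * A r (σ a) :=
        (Finset.sum_congr rfl fun a _ => by rw [hterm a])
    _ = ∑ x : S, (if hj : (x : Fin m) ∈ S then
          d i ((S.orderIsoOfFin hScard).symm ⟨x, hj⟩) else 0) * A r x := by
        rw [← Equiv.sum_comp (S.orderIsoOfFin hScard).toEquiv]
        exact Finset.sum_congr rfl fun a _ => by rw [hcoe a]
    _ = ∑ j ∈ S, (if hj : j ∈ S then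
          d i ((S.orderIsoOfFin hScard).symm ⟨j, hj⟩) else 0) * A r j :=
        Finset.sum_coe_sort S (fun j => (if hj : j ∈ S then
          d i ((S.orderIsoOfFin hScard).symm ⟨j, hj⟩) else 0) * A r j)
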